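/- arXiv:2010.14634 — 7 statements merged into one kernel-verified Lean document; each statement's English description precedes it below -/
import Mathlib

section
/- The Cayley graph of the Heisenberg group H_d with connection set S_d = {(e_1,0),...,(e_d,0)} contains no 4-cycles. -/
namespace Stmt2

/-- The bilinear form `β(x,y) = Σ_{1 ≤ i < j ≤ d} x_i y_j` on `(Z/2)^d`. -/
def β (d : ℕ) (x y : Fin d → ZMod 2) : ZMod 2 :=
  ∑ i : Fin d, ∑ j : Fin d, if i < j then x i * y j else 0

/-- The Heisenberg multiplication `(x,t)(y,s) = (x+y, s+t+β(x,y))` on `H_d`. -/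
def mul (d : ℕ) (a b : (Fin d → ZMod 2) × ZMod 2) : (Fin d → ZMod 2) × ZMod 2 :=
  (a.1 + b.1, b.2 + a.2 + β d a.1 b.1)

/-- The Cayley graph `Cay(H_d, S_d)` with connection set
`S_d = {(e_1,0),…,(e_d,0)}` (each element is its own inverse):
`g ~ h` iff `g = s·h` for some `s ∈ S_d`. -/
def cayley (d : ℕ) : SimpleGraph ((Fin d → ZMod 2) × ZMod 2) :=
  SimpleGraph.fromRel (fun g h => ∃ i : Fin d, mul d (Pi.single i 1, 0) h = g)

lemma beta_add_right (d : ℕ) (x y z : Fin d → ZMod 2) :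
    β d x (y + z) = β d x y + β d x z := by
  simp only [β, Pi.add_apply, mul_add, ← Finset.sum_add_distrib]
  apply Finset.sum_congr rfl; intro i _
  apply Finset.sum_congr rfl; intro j _
  split_ifs <;> simp

lemma beta_ss (d : ℕ) (i j : Fin d) :
    β d (Pi.single i 1) (Pi.single j 1) = if i < j then 1 else 0 := by
  simp only [β, Pi.single_apply, mul_ite, ite_mul, one_mul, mul_one, zero_mul, mul_zero]
  rw [Finset.sum_eq_single i, Finset.sum_eq_single j]
  · simp
  · intro b _ hb; simp [hb]
  · simp
  · intro a _ ha
    rw [Finset.sum_eq_single j] <;> simp [ha]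
  · simp

lemma mul_invol (d : ℕ) (i : Fin d) (h : (Fin d → ZMod 2) × ZMod 2) :
    mul d (Pi.single i 1, 0) (mul d (Pi.single i 1, 0) h) = h := by
  simp only [mul]
  refine Prod.ext ?_ ?_
  · show Pi.single i 1 + (Pi.single i 1 + h.1) = h.1
    rw [← add_assoc]
    funext a
    simp [CharTwo.add_self_eq_zero]
  · show h.2 + 0 + β d (Pi.single i 1) h.1 + 0 + β d (Pi.single i 1) (Pi.single i 1 + h.1) = h.2
    rw [beta_add_right, beta_ss]
    simp [CharTwo.add_self_eq_zero, add_assoc]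

lemma adj_to {d : ℕ} {g h : (Fin d → ZMod 2) × ZMod 2} (hadj : (cayley d).Adj g h) :
    ∃ i, g = mul d (Pi.single i 1, 0) h := by
  rw [cayley, SimpleGraph.fromRel_adj] at hadj
  obtain ⟨hne, h1 | h1⟩ := hadj
  · exact h1.imp fun i hi => hi.symm
  · obtain ⟨i, hi⟩ := h1; exact ⟨i, by rw [← hi, mul_invol]⟩

/-- `Cay(H_d, S_d)` contains no 4-cycles. -/
theorem stmt2 (d : ℕ) (v : (Fin d → ZMod 2) × ZMod 2)
    (c : (cayley d).Walk v v) (hc : c.IsCycle) : c.length ≠ 4 := by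
  intro hlen
  cases c with
  | nil => simp at hlen
  | cons h1 p =>
  cases p with
  | nil => simp at hlen
  | cons h2 p =>
  cases p with
  | nil => simp at hlen
  | cons h3 p =>
  cases p with
  | nil => simp at hlen
  | cons h4 p =>
  cases p with
  | cons h5 p => simp [SimpleGraph.Walk.length_cons] at hlen
  | nil =>
  rename_i a b w
  -- distinctness
  have hnd := hc.support_nodup
  simp only [SimpleGraph.Walk.support_cons, SimpleGraph.Walk.support_nil,
    List.tail_cons, List.nodup_cons, List.mem_cons, List.mem_singleton,
    List.not_mem_nil, List.nodup_nil] at hnd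
  obtain ⟨ha, hb, hw, -⟩ := hnd
  push_neg at ha hb
  obtain ⟨hab, haw, hav⟩ := ha
  obtain ⟨hbw, hbv⟩ := hb
  -- adjacency relations
  obtain ⟨i, hi⟩ := adj_to h1.symm  -- a = s_i • v
  obtain ⟨j, hj⟩ := adj_to h2.symm  -- b = s_j • a
  obtain ⟨k, hk⟩ := adj_to h3.symm  -- w = s_k • b
  obtain ⟨l, hl⟩ := adj_to h4.symm  -- v = s_l • w
  subst hi hj hk
  have h0 := congrArg Prod.fst hl
  simp only [mul] at h0
  by_cases hij : i = j
  · exact hbv.1 (by rw [hij]; exact mul_invol d j v)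
  by_cases hkl : k = l
  · rw [hkl, mul_invol] at hl
    exact hbv.1 hl.symm
  by_cases hki : k = i
  · by_cases hlj : l = j
    · rw [hki, hlj] at hl
      have key : mul d (Pi.single i 1, 0) (mul d (Pi.single j 1, 0) v)
          = mul d (Pi.single j 1, 0) (mul d (Pi.single i 1, 0) v) := by
        conv_lhs => rw [hl]
        rw [mul_invol, mul_invol]
      have h2c := congrArg Prod.snd key
      simp only [mul, add_zero] at h2c
      rw [beta_add_right, beta_add_right, beta_ss, beta_ss] at h2c
      rcases lt_or_gt_of_ne (fun h => hij h) with hlt | hlt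
      · rw [if_pos hlt, if_neg (not_lt.mpr hlt.le)] at h2c
        have : (1 : ZMod 2) = 0 := by linear_combination h2c
        exact one_ne_zero this
      · rw [if_neg (not_lt.mpr hlt.le), if_pos hlt] at h2c
        have : (1 : ZMod 2) = 0 := by linear_combination -h2c
        exact one_ne_zero this
    · have hfj := congrFun h0 j
      simp only [Pi.add_apply, Pi.single_apply, if_true] at hfj
      rw [if_neg (fun h : j = l => hlj h.symm),
        if_neg (fun h : j = k => hij (h.trans hki).symm),
        if_neg (fun h : j = i => hij h.symm)] at hfj
      simp only [zero_add] at hfj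
      exact one_ne_zero (right_eq_add.mp hfj)
  · by_cases hli : l = i
    · rw [hli] at hl
      have hw2 : mul d (Pi.single i 1, 0) v = mul d (Pi.single k 1, 0)
          (mul d (Pi.single j 1, 0) (mul d (Pi.single i 1, 0) v)) := by
        conv_lhs => rw [hl]
        rw [mul_invol]
      exact haw hw2
    · have hfi := congrFun h0 i
      simp only [Pi.add_apply, Pi.single_apply, if_true] at hfi
      rw [if_neg (fun h : i = l => hli h.symm),
        if_neg (fun h : i = k => hki h.symm),
        if_neg (fun h : i = j => hij h)] at hfi
      simp only [zero_add] at hfi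
      exact one_ne_zero (right_eq_add.mp hfi)

end Stmt2
end

section
/- For every d ≥ 1 there exists a ±1 signing of the adjacency matrix of the d-dimensional hypercube Q_d such that the product of the signs of the four edges of every 4-cycle in Q_d is -1. -/
namespace Stmt4

private def NN (d : ℕ) (u v : Fin d → ZMod 2) : ℕ :=
  ∑ l, ∑ k, if k < l ∧ u l ≠ v l then (u k * v k).val else 0

private lemma NN_symm (d : ℕ) (u v : Fin d → ZMod 2) : NN d u v = NN d v u := by
  unfold NN
  refine Finset.sum_congr rfl fun l _ => Finset.sum_congr rfl fun k _ => ?_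
  rw [mul_comm]
  congr 1
  simp [ne_comm]

private lemma mul_self_zmod2 (x : ZMod 2) : x * x = x := by revert x; decide

private lemma NN_edge (d : ℕ) (u : Fin d → ZMod 2) (i : Fin d) :
    NN d u (u + Pi.single i 1) = ∑ k ∈ Finset.Iio i, (u k).val := by
  set v := u + Pi.single i 1 with hv
  have hne : ∀ l, l ≠ i → v l = u l := by
    intro l hl; simp [hv, Pi.single_apply, hl]
  have hvi : u i ≠ v i := by
    simp only [hv, Pi.add_apply, Pi.single_eq_same]
    intro h
    exact one_ne_zero (left_eq_add.mp h)
  unfold NN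
  rw [Finset.sum_eq_single i]
  · have key : ∀ k : Fin d, (if k < i ∧ u i ≠ v i then (u k * v k).val else 0)
        = if k ∈ Finset.Iio i then (u k).val else 0 := by
      intro k
      by_cases hk : k < i
      · rw [if_pos ⟨hk, hvi⟩, if_pos (Finset.mem_Iio.mpr hk),
          hne k (Fin.ne_of_lt hk), mul_self_zmod2]
      · rw [if_neg (by tauto), if_neg (by simpa using hk)]
    rw [Finset.sum_congr rfl fun k _ => key k, Finset.sum_ite_mem, Finset.univ_inter]
  · intro l _ hl
    apply Finset.sum_eq_zero
    intro k _
    rw [if_neg]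
    rintro ⟨-, h⟩
    exact h (hne l hl).symm
  · intro h; exact absurd (Finset.mem_univ i) h

/-- For every `d ≥ 1` there is a symmetric `±1` signing of the edges of the
hypercube `Q_d` (vertices `(Z/2)^d`, adjacency: differ in exactly one
coordinate, i.e. `v = u + e_i`) such that the product of the signs around
every 4-cycle `v, v+e_i, v+e_i+e_j, v+e_j` (`i ≠ j`) is `-1`. -/
theorem stmt4 (d : ℕ) (hd : 1 ≤ d) :
    ∃ s : (Fin d → ZMod 2) → (Fin d → ZMod 2) → ℤ,
      (∀ u v, s u v = s v u) ∧
      (∀ u v : Fin d → ZMod 2, (∃ i : Fin d, v = u + Pi.single i 1) →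
        s u v = 1 ∨ s u v = -1) ∧
      (∀ (v : Fin d → ZMod 2) (i j : Fin d), i ≠ j →
        s v (v + Pi.single i 1) *
          s (v + Pi.single i 1) (v + Pi.single i 1 + Pi.single j 1) *
          s (v + Pi.single i 1 + Pi.single j 1) (v + Pi.single j 1) *
          s (v + Pi.single j 1) v = -1) := by
  refine ⟨fun u v => (-1 : ℤ) ^ (NN d u v), fun u v => congrArg ((-1 : ℤ) ^ ·) (NN_symm d u v), fun u v _ => ?_, ?_⟩
  · rcases Nat.even_or_odd (NN d u v) with h | h
    · left; exact h.neg_one_pow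
    · right; exact h.neg_one_pow
  · intro v i j hij
    show (-1 : ℤ) ^ NN d v (v + Pi.single i 1) * (-1) ^ NN d (v + Pi.single i 1) (v + Pi.single i 1 + Pi.single j 1) * (-1) ^ NN d (v + Pi.single i 1 + Pi.single j 1) (v + Pi.single j 1) * (-1) ^ NN d (v + Pi.single j 1) v = -1
    have e3 : (v + Pi.single i 1 + Pi.single j 1) + Pi.single i 1 = v + Pi.single j 1 := by
      ext k
      simp only [Pi.add_apply]
      have : ∀ x a b : ZMod 2, x + a + b + a = x + b := by decide
      exact this _ _ _
    have e4 : (v + Pi.single j 1) + Pi.single j 1 = v := by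
      ext k
      simp only [Pi.add_apply]
      have : ∀ x a : ZMod 2, x + a + a = x := by decide
      exact this _ _
    have h3 := NN_edge d (v + Pi.single i 1 + Pi.single j 1) i
    rw [e3] at h3
    have h4 := NN_edge d (v + Pi.single j 1) j
    rw [e4] at h4
    rw [NN_edge, NN_edge, h3, h4, ← pow_add, ← pow_add, ← pow_add]
    apply Odd.neg_one_pow
    rw [Nat.odd_iff]
    have hcast : ∀ n : ℕ, (n : ZMod 2) = 1 → n % 2 = 1 := by
      intro n h
      have := congrArg ZMod.val h
      rwa [ZMod.val_natCast, ZMod.val_one] at this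
    apply hcast
    push_cast [ZMod.natCast_val, ZMod.cast_id]
    simp only [Pi.add_apply, Finset.sum_add_distrib]
    have hsingle : ∀ (a b : Fin d), ∑ k ∈ Finset.Iio b, Pi.single a (1 : ZMod 2) k
        = if a < b then 1 else 0 := by
      intro a b
      simp [Pi.single_apply, Finset.sum_ite_eq', Finset.mem_Iio]
    rw [hsingle, hsingle, hsingle, hsingle]
    generalize (∑ k ∈ Finset.Iio i, v k) = a
    generalize (∑ k ∈ Finset.Iio j, v k) = b
    rcases hij.lt_or_gt with h | h
    · rw [if_pos h, if_neg (asymm h), if_neg (lt_irrefl i), if_neg (lt_irrefl j)]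
      revert a b; decide
    · rw [if_neg (asymm h), if_pos h, if_neg (lt_irrefl i), if_neg (lt_irrefl j)]
      revert a b; decide

end Stmt4
end

section
/- Define matrices recursively by A_1 = [[0,1],[1,0]] and A_d = [[A_{d-1}, I],[I, -A_{d-1}]]. Then A_d^2 = d·I for all d ≥ 1. -/
namespace Stmt5

/-- Huang's matrices: `A_1 = [[0,1],[1,0]]`,
`A_{d+1} = [[A_d, I],[I, -A_d]]` (as a block matrix, reindexed so that
`A_{d+1}` is a `2^{d+1} × 2^{d+1}` matrix). Then `A_d ^ 2 = d • I` for all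
`d ≥ 1`. -/
theorem stmt5 (A : ∀ d : ℕ, Matrix (Fin (2 ^ d)) (Fin (2 ^ d)) ℝ)
    (h1 : A 1 = Matrix.reindex (finCongr (by norm_num)) (finCongr (by norm_num))
      !![0, 1; 1, 0])
    (hrec : ∀ d : ℕ, 1 ≤ d → A (d + 1) =
      Matrix.reindex
        (finSumFinEquiv.trans (finCongr (by rw [pow_succ, Nat.mul_two])))
        (finSumFinEquiv.trans (finCongr (by rw [pow_succ, Nat.mul_two])))
        (Matrix.fromBlocks (A d) 1 1 (-(A d)))) :
    ∀ d : ℕ, 1 ≤ d → (A d) ^ 2 = (d : ℝ) • 1 := by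
  intro d hd
  induction d with
  | zero => omega
  | succ n ih =>
    rcases Nat.eq_or_lt_of_le hd with h | h
    · -- n + 1 = 1
      have hn : n = 0 := by omega
      subst hn
      rw [h1]
      ext i j
      simp only [pow_two, Matrix.reindex_apply, Matrix.submatrix_mul_equiv,
        Matrix.submatrix_apply]
      fin_cases i <;> fin_cases j <;>
        simp [Matrix.mul_apply, Fin.sum_univ_succ, Matrix.one_apply, finCongr]
    · have hn : 1 ≤ n := by omega
      have ihn := ih hn
      rw [hrec n hn]
      rw [pow_two, Matrix.reindex_apply, Matrix.submatrix_mul_equiv,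
        Matrix.fromBlocks_multiply]
      have key : Matrix.fromBlocks
          (A n * A n + 1 * 1) (A n * 1 + 1 * -A n)
          (1 * A n + -A n * 1) (1 * 1 + -A n * -A n) =
          ((n : ℝ) + 1) • (1 : Matrix (Fin (2^n) ⊕ Fin (2^n)) (Fin (2^n) ⊕ Fin (2^n)) ℝ) := by
        have h2 : A n * A n = (n : ℝ) • 1 := by rw [← pow_two, ihn]
        ext (i | i) (j | j) <;>
          simp [h2, neg_mul_neg, Matrix.one_apply, add_smul, Matrix.smul_apply, add_comm] <;> split_ifs <;> simp
      rw [key]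
      ext i j
      push_cast
      simp [Matrix.submatrix_apply, Matrix.one_apply, Fin.ext_iff]

end Stmt5
end

section
/- Let p be prime. The map κ_− : ((Z/p)^d × (Z/p)^d)² → Z/p defined by κ_−((a,b),(c,d)) = b·c + φ(a_1, c_1) is a 2-cocycle, where φ is the carrying cocycle and a_1, c_1 are the first coordinates of a and c. -/
namespace Stmt13

/-- The "carrying" cocycle `φ(a,b) = [ι(a)+ι(b) ≥ p]`. -/
def phi (p : ℕ) (a b : ZMod p) : ZMod p :=
  if a.val + b.val < p then 0 else 1

/-- `κ_−((a,b),(c,d)) = b·c + φ(a_1, c_1)`, where `a_1, c_1` are the first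
coordinates of `a` and `c` (here `d ≥ 1` via `hd : 0 < d`). -/
def κminus (p d : ℕ) (hd : 0 < d)
    (x y : (Fin d → ZMod p) × (Fin d → ZMod p)) : ZMod p :=
  (∑ i : Fin d, x.2 i * y.1 i) + phi p (x.1 ⟨0, hd⟩) (y.1 ⟨0, hd⟩)

lemma phi_eq (p : ℕ) [NeZero p] (a b : ZMod p) :
    phi p a b = (((a.val + b.val) / p : ℕ) : ZMod p) := by
  unfold phi
  split_ifs with h
  · rw [Nat.div_eq_of_lt h]; simp
  · have h1 : a.val + b.val < 2 * p := by
      have := ZMod.val_lt a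
      have := ZMod.val_lt b
      omega
    have hk : a.val + b.val = (a.val + b.val - p) + p := by omega
    have : (a.val + b.val) / p = 1 := by
      rw [hk, Nat.add_div_right _ (Nat.pos_of_ne_zero (NeZero.ne p)),
        Nat.div_eq_of_lt (by omega)]
    rw [this]; simp

lemma nat_carry (p : ℕ) (hp : 0 < p) (A C E : ℕ) :
    ((A + C) % p + E) / p + (A + C) / p = (A + C + E) / p := by
  conv_rhs => rw [show A + C + E = (A + C) % p + E + p * ((A + C) / p) by
    have := Nat.mod_add_div (A + C) p; omega]
  rw [Nat.add_mul_div_left _ _ hp]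

lemma phi_cocycle (p : ℕ) [NeZero p] (a c e : ZMod p) :
    phi p (a + c) e + phi p a c = phi p a (c + e) + phi p c e := by
  rw [phi_eq, phi_eq, phi_eq, phi_eq, ZMod.val_add, ZMod.val_add,
    ← Nat.cast_add, ← Nat.cast_add]
  congr 1
  rw [nat_carry p (Nat.pos_of_ne_zero (NeZero.ne p))]
  have : a.val + (c.val + e.val) % p = ((c.val + e.val) % p + a.val) := by ring
  rw [this]
  rw [show a.val + c.val + e.val = c.val + e.val + a.val by ring,
    ← nat_carry p (Nat.pos_of_ne_zero (NeZero.ne p))]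

/-- `κ_−` is a 2-cocycle: `κ(x+y,z) + κ(x,y) = κ(x,y+z) + κ(y,z)`. -/
theorem stmt13 (p d : ℕ) (hp : p.Prime) (hd : 0 < d) :
    ∀ x y z : (Fin d → ZMod p) × (Fin d → ZMod p),
      κminus p d hd (x + y) z + κminus p d hd x y =
        κminus p d hd x (y + z) + κminus p d hd y z := by
  haveI : NeZero p := ⟨hp.ne_zero⟩
  intro x y z
  have hφ := phi_cocycle p (x.1 ⟨0, hd⟩) (y.1 ⟨0, hd⟩) (z.1 ⟨0, hd⟩)
  simp only [κminus, Prod.fst_add, Prod.snd_add, Pi.add_apply, add_mul, mul_add,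
    Finset.sum_add_distrib]
  linear_combination hφ

end Stmt13
end

section
/- In the group G on (Z/p)^d × (Z/p)^d × Z/p with multiplication (a,b,z)(c,d,w) = (a+c, b+d, z+w+b·c+φ(a_1,c_1)), the commutator of (a,b,z) and (c,d,w) equals (0,0, b·c − a·d); in particular it agrees with the commutator of the exponent-p extraspecial group. -/
namespace Stmt14

/-- The "carrying" cocycle `φ(a,b) = [ι(a)+ι(b) ≥ p]`. -/
def phi (p : ℕ) (a b : ZMod p) : ZMod p :=
  if a.val + b.val < p then 0 else 1

/-- The multiplication `(a,b,z)(c,d,w) = (a+c, b+d, z+w+b·c+φ(a_1,c_1))`. -/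
def mmul (p d : ℕ) (hd : 0 < d)
    (g h : (Fin d → ZMod p) × (Fin d → ZMod p) × ZMod p) :
    (Fin d → ZMod p) × (Fin d → ZMod p) × ZMod p :=
  (g.1 + h.1, g.2.1 + h.2.1,
    g.2.2 + h.2.2 + (∑ i : Fin d, g.2.1 i * h.1 i) + phi p (g.1 ⟨0, hd⟩) (h.1 ⟨0, hd⟩))

lemma phi_comm (p : ℕ) (x y : ZMod p) : phi p x y = phi p y x := by
  unfold phi; rw [Nat.add_comm]

/-- Carrying decomposition of addition of values. -/
lemma carry (p : ℕ) (hp : 0 < p) (x y : ZMod p) :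
    x.val + y.val = (x + y).val + p * (if x.val + y.val < p then 0 else 1) := by
  haveI : NeZero p := ⟨hp.ne'⟩
  have hx := ZMod.val_lt x
  have hy := ZMod.val_lt y
  have h := ZMod.val_add x y
  split_ifs with h'
  · rw [h, Nat.mod_eq_of_lt h']; omega
  · push_neg at h'
    rw [h, Nat.mod_eq_sub_mod h', Nat.mod_eq_of_lt (by omega)]; omega

/-- The cocycle identity needed for the commutator. -/
lemma phi_id (p : ℕ) (hp : 0 < p) (a c : ZMod p) :
    phi p (-a) (-c) + phi p (-a + -c) a = phi p a (-a) := by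
  have key : ∀ x y : ZMod p, phi p x y =
      ((if x.val + y.val < p then 0 else 1 : ℕ) : ZMod p) := by
    intro x y; unfold phi; split_ifs <;> simp
  have c1 := carry p hp (-a) (-c)
  have c2 := carry p hp (-a + -c) a
  have c3 := carry p hp a (-a)
  have e1 : (-a + -c) + a = -c := by ring
  have e3 : a + -a = 0 := by ring
  rw [e1] at c2
  rw [e3, ZMod.val_zero] at c3
  set n1 : ℕ := if (-a).val + (-c).val < p then 0 else 1 with hn1
  set n2 : ℕ := if (-a + -c).val + a.val < p then 0 else 1 with hn2
  set n3 : ℕ := if a.val + (-a).val < p then 0 else 1 with hn3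
  have hsum : p * (n1 + n2) = p * n3 := by
    rw [Nat.mul_add]; omega
  have : n1 + n2 = n3 := Nat.eq_of_mul_eq_mul_left hp hsum
  rw [key, key, key, ← Nat.cast_add, this]

/-- In the group with the carrying multiplication, the commutator
`[g,h] = g⁻¹h⁻¹gh` of `g = (a,b,z)` and `h = (c,d,w)` equals
`(0, 0, b·c − a·d)`, the same as in the exponent-`p` extraspecial group.
Here `gi, hi` are the inverses of `g, h`. -/
theorem stmt14 (p d : ℕ) (hp : p.Prime) (hd : 0 < d)
    (g h gi hi : (Fin d → ZMod p) × (Fin d → ZMod p) × ZMod p)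
    (hg : mmul p d hd g gi = (0, 0, 0) ∧ mmul p d hd gi g = (0, 0, 0))
    (hh : mmul p d hd h hi = (0, 0, 0) ∧ mmul p d hd hi h = (0, 0, 0)) :
    mmul p d hd (mmul p d hd (mmul p d hd gi hi) g) h =
      (0, 0, (∑ i : Fin d, g.2.1 i * h.1 i) - ∑ i : Fin d, g.1 i * h.2.1 i) := by
  obtain ⟨hg1, -⟩ := hg
  obtain ⟨hh1, -⟩ := hh
  rw [mmul, Prod.mk.injEq, Prod.mk.injEq] at hg1 hh1
  obtain ⟨ga, gb, gz⟩ := hg1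
  obtain ⟨ha, hb, hz⟩ := hh1
  have hgi1 : gi.1 = -g.1 := by
    have := congrArg (fun x => -g.1 + x) ga; simpa [← add_assoc] using this
  have hgi2 : gi.2.1 = -g.2.1 := by
    have := congrArg (fun x => -g.2.1 + x) gb; simpa [← add_assoc] using this
  have hhi1 : hi.1 = -h.1 := by
    have := congrArg (fun x => -h.1 + x) ha; simpa [← add_assoc] using this
  have hhi2 : hi.2.1 = -h.2.1 := by
    have := congrArg (fun x => -h.2.1 + x) hb; simpa [← add_assoc] using this
  simp only [mmul, Prod.mk.injEq] 
  simp only [hgi1, hgi2, hhi1, hhi2] at gz hz ⊢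
  refine ⟨by ring, by ring, ?_⟩
  simp only [Pi.add_apply, Pi.neg_apply, mul_neg, neg_mul, add_mul,
    Finset.sum_add_distrib, Finset.sum_neg_distrib] at gz hz ⊢
  have e1 : -g.1 ⟨0, hd⟩ + -h.1 ⟨0, hd⟩ + g.1 ⟨0, hd⟩ = -h.1 ⟨0, hd⟩ := by ring
  rw [e1, phi_comm p (-h.1 ⟨0, hd⟩) (h.1 ⟨0, hd⟩)]
  have key := phi_id p hp.pos (g.1 ⟨0, hd⟩) (h.1 ⟨0, hd⟩)
  have comm : ∑ i : Fin d, g.1 i * h.2.1 i = ∑ i : Fin d, h.2.1 i * g.1 i := by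
    exact Finset.sum_congr rfl fun i _ => mul_comm _ _
  linear_combination gz + hz + key + comm

end Stmt14
end

section
/- Let p be an odd prime and let G be the group on (Z/p)^d × (Z/p)^d × Z/p with multiplication (a,b,z)(c,d,w) = (a+c, b+d, z+w+b·c+φ(a_1,c_1)). Let v = (1,0,...,0) ∈ (Z/p)^d. Then (v,0,0)^p = (0,0,1), so (v,0,0) has order p², and G has exponent p². -/
namespace Stmt15

/-- The "carrying" cocycle `φ(a,b) = [ι(a)+ι(b) ≥ p]`. -/
def phi (p : ℕ) (a b : ZMod p) : ZMod p :=
  if a.val + b.val < p then 0 else 1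

/-- The multiplication `(a,b,z)(c,d,w) = (a+c, b+d, z+w+b·c+φ(a_1,c_1))`. -/
def mmul (p d : ℕ) (hd : 0 < d)
    (g h : (Fin d → ZMod p) × (Fin d → ZMod p) × ZMod p) :
    (Fin d → ZMod p) × (Fin d → ZMod p) × ZMod p :=
  (g.1 + h.1, g.2.1 + h.2.1,
    g.2.2 + h.2.2 + (∑ i : Fin d, g.2.1 i * h.1 i) + phi p (g.1 ⟨0, hd⟩) (h.1 ⟨0, hd⟩))

/-- `g ^ n`: left multiplication by `g` iterated `n` times on `(0,0,0)`. -/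
def mpow (p d : ℕ) (hd : 0 < d)
    (g : (Fin d → ZMod p) × (Fin d → ZMod p) × ZMod p) (n : ℕ) :
    (Fin d → ZMod p) × (Fin d → ZMod p) × ZMod p :=
  (fun x => mmul p d hd g x)^[n] (0, 0, 0)

lemma carry_sum (p : ℕ) (hp : 0 < p) (a : ZMod p) (n : ℕ) :
    ∃ c : ℕ, n * a.val = (n • a).val + p * c ∧
      (∑ k ∈ Finset.range n, phi p a (k • a)) = (c : ZMod p) := by
  haveI : NeZero p := ⟨hp.ne'⟩
  induction n with
  | zero => exact ⟨0, by simp, by simp⟩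
  | succ n ih =>
    obtain ⟨c, h1, h2⟩ := ih
    have hva : a.val < p := ZMod.val_lt a
    have hvn : (n • a).val < p := ZMod.val_lt _
    have hm : (n + 1) * a.val = n * a.val + a.val := by ring
    have hsucc : ((n + 1) • a).val = ((n • a).val + a.val) % p := by
      rw [succ_nsmul, ZMod.val_add]
    by_cases h : a.val + (n • a).val < p
    · refine ⟨c, ?_, ?_⟩
      · have hv : ((n + 1) • a).val = (n • a).val + a.val := by
          rw [hsucc, Nat.mod_eq_of_lt (by omega)]
        rw [hm, h1, hv]; ring
      · rw [Finset.sum_range_succ, h2, phi, if_pos h, add_zero]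
    · refine ⟨c + 1, ?_, ?_⟩
      · have hv : ((n + 1) • a).val = (n • a).val + a.val - p := by
          rw [hsucc, Nat.mod_eq_sub_mod (by omega), Nat.mod_eq_of_lt (by omega)]
        have hge : p ≤ a.val + (n • a).val := le_of_not_gt h
        rw [hm, h1, hv, Nat.mul_add, Nat.mul_one]
        set x := p * c
        omega
      · rw [Finset.sum_range_succ, h2, phi, if_neg h]
        push_cast
        ring

lemma mpow_eq (p d : ℕ) (hd : 0 < d)
    (g : (Fin d → ZMod p) × (Fin d → ZMod p) × ZMod p) (n : ℕ) :
    mpow p d hd g n =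
      (n • g.1, n • g.2.1,
        n • g.2.2
          + ∑ k ∈ Finset.range n, ∑ i : Fin d, g.2.1 i * (k • g.1 i)
          + ∑ k ∈ Finset.range n, phi p (g.1 ⟨0, hd⟩) (k • g.1 ⟨0, hd⟩)) := by
  induction n with
  | zero => simp [mpow]
  | succ n ih =>
    have hstep : mpow p d hd g (n + 1) = mmul p d hd g (mpow p d hd g n) := by
      rw [mpow, mpow, Function.iterate_succ_apply']
    rw [hstep, ih, mmul]
    refine Prod.ext ?_ (Prod.ext ?_ ?_)
    · show g.1 + n • g.1 = (n + 1) • g.1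
      rw [succ_nsmul, add_comm]
    · show g.2.1 + n • g.2.1 = (n + 1) • g.2.1
      rw [succ_nsmul, add_comm]
    · show g.2.2 + _ + _ + _ = _
      simp only [Finset.sum_range_succ, succ_nsmul, Pi.smul_apply]
      ring

/-- For `v = (1,0,…,0)` we have `(v,0,0)^p = (0,0,1)`, so `(v,0,0)` has
order `p²`; moreover every element satisfies `g^{p²} = 1`, so the group has
exponent `p²`. -/
theorem stmt15 (p d : ℕ) (hp : p.Prime) (hodd : Odd p) (hd : 0 < d) :
    mpow p d hd (Pi.single (⟨0, hd⟩ : Fin d) (1 : ZMod p), 0, 0) p = (0, 0, 1) ∧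
    (∀ n : ℕ, 0 < n → n < p ^ 2 →
      mpow p d hd (Pi.single (⟨0, hd⟩ : Fin d) (1 : ZMod p), 0, 0) n ≠ (0, 0, 0)) ∧
    (∀ g : (Fin d → ZMod p) × (Fin d → ZMod p) × ZMod p,
      mpow p d hd g (p ^ 2) = (0, 0, 0)) := by
  have hp0 : 0 < p := hp.pos
  haveI : NeZero p := ⟨hp0.ne'⟩
  haveI : Fact (1 < p) := ⟨hp.one_lt⟩
  set v : Fin d → ZMod p := Pi.single (⟨0, hd⟩ : Fin d) (1 : ZMod p) with hv
  have hv0 : v ⟨0, hd⟩ = 1 := Pi.single_eq_same _ _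
  have hpz : ∀ x : ZMod p, p • x = 0 := fun x => by
    rw [nsmul_eq_mul, ZMod.natCast_self, zero_mul]
  have hpz2 : ∀ x : ZMod p, p ^ 2 • x = 0 := fun x => by
    rw [nsmul_eq_mul]; push_cast; rw [ZMod.natCast_self]; ring
  have hone : (1 : ZMod p).val = 1 := ZMod.val_one p
  have hform : ∀ n, mpow p d hd (v, 0, 0) n
      = (n • v, 0, ∑ k ∈ Finset.range n, phi p 1 (k • (1 : ZMod p))) := by
    intro n
    rw [mpow_eq]
    simp [hv0]
  refine ⟨?_, ?_, ?_⟩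
  · rw [hform p]
    obtain ⟨c, h1, h2⟩ := carry_sum p hp0 1 p
    rw [hone, hpz, ZMod.val_zero, zero_add, mul_one] at h1
    have hc : c = 1 := by
      have h1' : p * 1 = p * c := by rw [mul_one]; exact h1
      have := Nat.eq_of_mul_eq_mul_left hp0 h1'
      omega
    rw [h2, hc]
    refine Prod.ext ?_ (Prod.ext rfl ?_)
    · funext i
      show p • v i = 0
      exact hpz _
    · show ((1 : ℕ) : ZMod p) = 1
      simp
  · intro n hn1 hn2 heq
    rw [hform n, Prod.mk.injEq, Prod.mk.injEq] at heq
    obtain ⟨e1, -, e3⟩ := heq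
    have e1' : (n : ZMod p) = 0 := by
      have := congrFun e1 ⟨0, hd⟩
      rw [Pi.smul_apply, hv0, nsmul_eq_mul, mul_one] at this
      exact this
    obtain ⟨c, h1, h2⟩ := carry_sum p hp0 1 n
    have hn1smul : n • (1 : ZMod p) = 0 := by rw [nsmul_eq_mul, mul_one, e1']
    rw [hone, mul_one, hn1smul, ZMod.val_zero, zero_add] at h1
    rw [h2] at e3
    have hpc : p ∣ c := (ZMod.natCast_eq_zero_iff c p).mp e3
    obtain ⟨c', hc'⟩ := hpc
    have : p ^ 2 ∣ n := ⟨c', by rw [h1, hc']; ring⟩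
    exact absurd (Nat.le_of_dvd hn1 this) (not_le.mpr hn2)
  · intro g
    rw [mpow_eq]
    have hgauss : p ∣ ∑ k ∈ Finset.range (p ^ 2), k := by
      have hm2 : (∑ k ∈ Finset.range (p ^ 2), k) * 2 = p ^ 2 * (p ^ 2 - 1) :=
        Finset.sum_range_id_mul_two _
      have h2 : p ∣ (∑ k ∈ Finset.range (p ^ 2), k) * 2 := by
        rw [hm2]; exact Dvd.dvd.mul_right (dvd_pow_self p two_ne_zero) _
      rcases (Nat.Prime.dvd_mul hp).mp h2 with h | h
      · exact h
      · exfalso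
        have : p = 2 := (Nat.prime_dvd_prime_iff_eq hp Nat.prime_two).mp h
        rw [this] at hodd
        simp [Nat.odd_iff] at hodd
    have hmid : ∑ k ∈ Finset.range (p ^ 2), ∑ i : Fin d, g.2.1 i * (k • g.1 i) = 0 := by
      have : ∀ k ∈ Finset.range (p ^ 2),
          ∑ i : Fin d, g.2.1 i * (k • g.1 i) = (k : ZMod p) * ∑ i : Fin d, g.2.1 i * g.1 i := by
        intro k _
        rw [Finset.mul_sum]
        exact Finset.sum_congr rfl fun i _ => by rw [nsmul_eq_mul]; ring
      rw [Finset.sum_congr rfl this, ← Finset.sum_mul, ← Nat.cast_sum,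
        (ZMod.natCast_eq_zero_iff _ p).mpr hgauss, zero_mul]
    have hcar : ∑ k ∈ Finset.range (p ^ 2),
        phi p (g.1 ⟨0, hd⟩) (k • g.1 ⟨0, hd⟩) = 0 := by
      obtain ⟨c, h1, h2⟩ := carry_sum p hp0 (g.1 ⟨0, hd⟩) (p ^ 2)
      rw [hpz2, ZMod.val_zero, zero_add] at h1
      have hc : c = p * (g.1 ⟨0, hd⟩).val := by
        have : p * c = p * (p * (g.1 ⟨0, hd⟩).val) := by rw [← h1]; ring
        exact (Nat.eq_of_mul_eq_mul_left hp0 this)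
      rw [h2, hc]
      simp [(ZMod.natCast_eq_zero_iff _ p).mpr ⟨_, rfl⟩]
    refine Prod.ext ?_ (Prod.ext ?_ ?_)
    · funext i
      show p ^ 2 • g.1 i = 0
      exact hpz2 _
    · funext i
      show p ^ 2 • g.2.1 i = 0
      exact hpz2 _
    · show p ^ 2 • g.2.2 + _ + _ = 0
      rw [hmid, hcar, hpz2, add_zero, add_zero]

end Stmt15
end

section
/- Let p be an odd prime, d ≥ 1, and in (Z/p)^d × (Z/p)^d define A = { Σ_{i≤k} e_i + Σ_{j≤k−1} f_j : 1 ≤ k ≤ d } and B = { Σ_{i≤k−1} e_i + 2e_k + Σ_{j≤k} f_j : 1 ≤ k ≤ d }, where e_1,...,e_d,f_1,...,f_d is the standard basis. Then S = A ∪ B is a basis of the 2d-dimensional vector space (Z/p)^{2d}. -/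
namespace Stmt16

/-- `a_k = Σ_{i ≤ k} e_i + Σ_{j ≤ k-1} f_j` (0-indexed: `e`-part has 1's in
positions `≤ k`, `f`-part has 1's in positions `< k`). -/
def aVec (p d : ℕ) (k : Fin d) : (Fin d → ZMod p) × (Fin d → ZMod p) :=
  (fun i => if i ≤ k then 1 else 0, fun j => if j < k then 1 else 0)

/-- `b_k = Σ_{i ≤ k-1} e_i + 2 e_k + Σ_{j ≤ k} f_j`. -/
def bVec (p d : ℕ) (k : Fin d) : (Fin d → ZMod p) × (Fin d → ZMod p) :=
  (fun i => if i < k then 1 else if i = k then 2 else 0,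
   fun j => if j ≤ k then 1 else 0)

/-- The family `S = A ∪ B` of `2d` vectors. -/
def sVec (p d : ℕ) : Fin d ⊕ Fin d → (Fin d → ZMod p) × (Fin d → ZMod p) :=
  Sum.elim (aVec p d) (bVec p d)

/-- For `p` an odd prime and `d ≥ 1`, `S = A ∪ B` is a basis of the
`2d`-dimensional vector space `(Z/p)^{2d} = (Z/p)^d × (Z/p)^d`. -/
theorem stmt16 (p d : ℕ) (hp : p.Prime) [Fact p.Prime] (hodd : Odd p) (hd : 1 ≤ d) :
    LinearIndependent (ZMod p) (sVec p d) ∧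
      Submodule.span (ZMod p) (Set.range (sVec p d)) = ⊤ := by
  classical
  set S := Submodule.span (ZMod p) (Set.range (sVec p d)) with hS
  have hEF : ∀ k : Fin d,
      ((Pi.single k 1, Pi.single k 1) : (Fin d → ZMod p) × (Fin d → ZMod p))
      = sVec p d (.inr k) - sVec p d (.inl k) := by
    intro k
    apply Prod.ext
    · funext i
      rcases lt_trichotomy i k with h|h|h
      · norm_num [sVec, aVec, bVec, Pi.single_apply, h, h.ne, h.le]
      · norm_num [sVec, aVec, bVec, Pi.single_apply, h]
      · norm_num [sVec, aVec, bVec, Pi.single_apply, (ne_of_gt h), not_le.mpr h,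
          not_lt.mpr h.le]
    · funext i
      rcases lt_trichotomy i k with h|h|h
      · norm_num [sVec, aVec, bVec, Pi.single_apply, h, h.ne, h.le]
      · norm_num [sVec, aVec, bVec, Pi.single_apply, h]
      · norm_num [sVec, aVec, bVec, Pi.single_apply, (ne_of_gt h), not_le.mpr h,
          not_lt.mpr h.le]
  have hEFmem : ∀ k : Fin d,
      ((Pi.single k 1, Pi.single k 1) : (Fin d → ZMod p) × (Fin d → ZMod p)) ∈ S := by
    intro k
    rw [hEF]
    exact sub_mem (Submodule.subset_span ⟨.inr k, rfl⟩)
      (Submodule.subset_span ⟨.inl k, rfl⟩)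
  have hA : ∀ k : Fin d,
      ((Pi.single k 1, 0) : (Fin d → ZMod p) × (Fin d → ZMod p))
      = sVec p d (.inl k) - ∑ i ∈ Finset.Iio k,
          ((Pi.single i 1, Pi.single i 1) : (Fin d → ZMod p) × (Fin d → ZMod p)) := by
    intro k
    apply Prod.ext
    · funext j
      simp only [sVec, aVec, Sum.elim_inl, Prod.fst_sub, Prod.fst_sum, Pi.sub_apply,
        Finset.sum_apply, Pi.single_apply, Finset.sum_ite_eq, Finset.mem_Iio]
      rcases lt_trichotomy j k with h|h|h
      · norm_num [h, h.ne, h.le]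
      · norm_num [h]
      · norm_num [(ne_of_gt h), not_le.mpr h, not_lt.mpr h.le]
    · funext j
      simp only [sVec, aVec, Sum.elim_inl, Prod.snd_sub, Prod.snd_sum, Pi.sub_apply,
        Finset.sum_apply, Pi.single_apply, Pi.zero_apply, Finset.sum_ite_eq, Finset.mem_Iio]
      rcases lt_trichotomy j k with h|h|h
      · norm_num [h, h.ne, h.le]
      · norm_num [h]
      · norm_num [(ne_of_gt h), not_le.mpr h, not_lt.mpr h.le]
  have hEmem : ∀ k : Fin d,
      ((Pi.single k 1, 0) : (Fin d → ZMod p) × (Fin d → ZMod p)) ∈ S := by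
    intro k
    rw [hA]
    exact sub_mem (Submodule.subset_span ⟨.inl k, rfl⟩)
      (Submodule.sum_mem _ fun i _ => hEFmem i)
  have hFmem : ∀ k : Fin d,
      ((0, Pi.single k 1) : (Fin d → ZMod p) × (Fin d → ZMod p)) ∈ S := by
    intro k
    have h0 : ((0, Pi.single k 1) : (Fin d → ZMod p) × (Fin d → ZMod p))
        = (Pi.single k 1, Pi.single k 1) - (Pi.single k 1, 0) := by
      apply Prod.ext <;> simp
    rw [h0]
    exact sub_mem (hEFmem k) (hEmem k)
  have htop : ⊤ ≤ S := by
    have hb := ((Pi.basisFun (ZMod p) (Fin d)).prod (Pi.basisFun (ZMod p) (Fin d))).span_eq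
    rw [← hb, Submodule.span_le]
    rintro x ⟨i, rfl⟩
    rcases i with i | i
    · simpa [Module.Basis.prod_apply, Pi.basisFun_apply] using hEmem i
    · simpa [Module.Basis.prod_apply, Pi.basisFun_apply] using hFmem i
  have hcard : Fintype.card (Fin d ⊕ Fin d)
      = Module.finrank (ZMod p) ((Fin d → ZMod p) × (Fin d → ZMod p)) := by
    simp [Module.finrank_prod]
  refine ⟨?_, le_antisymm le_top htop⟩
  have h1 := (basisOfTopLeSpanOfCardEqFinrank (sVec p d) htop hcard).linearIndependent
  rwa [coe_basisOfTopLeSpanOfCardEqFinrank] at h1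


end Stmt16
end
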